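/- Let A be an n×n real SPD matrix and M an n×n real matrix such that M + Mᵀ − A is SPD. Then M is invertible and the symmetrized smoother M̄ = M (M + Mᵀ − A)⁻¹ Mᵀ is SPD. -/

import Mathlib

open Matrix

lemma conj_posdef {n : ℕ} {N B : Matrix (Fin n) (Fin n) ℝ}
    (hN : N.PosDef) (hB : IsUnit B) : (B * N * Bᵀ).PosDef := by
  refine PosDef.of_dotProduct_mulVec_pos ?_ ?_
  · have h : Nᵀ = N := by
      exact (conjTranspose_eq_transpose_of_trivial N).symm.trans hN.isHermitian.eq
    simp only [IsHermitian, conjTranspose_eq_transpose_of_trivial, transpose_mul,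
      transpose_transpose, h]
    rw [mul_assoc]
  · intro x hx
    have hBT : IsUnit Bᵀ := (Matrix.isUnit_transpose B).mpr hB
    have hBx : Bᵀ *ᵥ x ≠ 0 := by
      intro h
      apply hx
      have hinj := Matrix.mulVec_injective_iff_isUnit.mpr hBT
      have : Bᵀ *ᵥ x = Bᵀ *ᵥ 0 := by simpa using h
      exact hinj this
    have h := hN.dotProduct_mulVec_pos hBx
    have key : star x ⬝ᵥ (B * N * Bᵀ) *ᵥ x = star (Bᵀ *ᵥ x) ⬝ᵥ N *ᵥ (Bᵀ *ᵥ x) := by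
      simp only [star_trivial, ← mulVec_mulVec]
      rw [dotProduct_mulVec, ← mulVec_transpose, dotProduct_mulVec, ← mulVec_transpose]
    rwa [key]

/-- The symmetrized smoother M̄ = M (M + Mᵀ − A)⁻¹ Mᵀ is SPD
whenever A is SPD and M + Mᵀ − A is SPD; in particular M is invertible. -/
theorem stmt_2 {n : ℕ}
    (A M : Matrix (Fin n) (Fin n) ℝ) (hA : A.PosDef)
    (hM : (M + Mᵀ - A).PosDef) :
    IsUnit M ∧ (M * (M + Mᵀ - A)⁻¹ * Mᵀ).PosDef := by
  have hMunit : IsUnit M := by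
    rw [← Matrix.mulVec_injective_iff_isUnit]
    intro u v huv
    by_contra hne
    have hw : u - v ≠ 0 := sub_ne_zero.mpr hne
    have hMw : M *ᵥ (u - v) = 0 := by
      rw [mulVec_sub, huv, sub_self]
    have h1 := hM.dotProduct_mulVec_pos hw
    have h2 := hA.dotProduct_mulVec_pos hw
    set w := u - v
    have hdot : star w ⬝ᵥ (M + Mᵀ - A) *ᵥ w = - (star w ⬝ᵥ A *ᵥ w) := by
      simp only [sub_mulVec, add_mulVec, dotProduct_sub, dotProduct_add, hMw,
        dotProduct_zero, star_trivial]
      have : w ⬝ᵥ Mᵀ *ᵥ w = (M *ᵥ w) ⬝ᵥ w := by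
        rw [dotProduct_mulVec, vecMul_transpose]
      rw [this, hMw, zero_dotProduct]
      ring
    rw [hdot] at h1
    simp only [star_trivial] at h1 h2
    linarith
  exact ⟨hMunit, conj_posdef hM.inv hMunit⟩
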